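/- The number of equivalence classes of labelings of C_n under the Reeder moves equals n + 1. -/

import Mathlib

/-- The move `T_i` on the diagram `C_n` (vertices `0,…,n-1`, with the last vertex long:
`T` at the last vertex is the identity, while all other vertices see both of their
path-neighbors). -/
def moveC (n : ℕ) (i : Fin n) (a : Fin n → ZMod 2) : Fin n → ZMod 2 := fun j =>
  if j = i then
    a i + ∑ k ∈ Finset.univ.filter
      (fun k : Fin n => (k.val + 1 = i.val ∨ i.val + 1 = k.val) ∧ i.val + 1 ≠ n), a k
  else a j

namespace CnAux
variable {n : ℕ}

def pr (a : Fin n → ZMod 2) (j : Fin n) : ZMod 2 :=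
  if h : j.val = 0 then 0 else a ⟨j.val - 1, Nat.lt_of_le_of_lt (Nat.sub_le _ _) j.isLt⟩

def dv (a : Fin n → ZMod 2) (j : Fin n) : ZMod 2 := a j + pr a j

lemma move_last (a : Fin n → ZMod 2) (i : Fin n) (h : i.val + 1 = n) :
    moveC n i a = a := by
  funext j
  unfold moveC
  have : (Finset.univ.filter
      (fun k : Fin n => (k.val + 1 = i.val ∨ i.val + 1 = k.val) ∧ i.val + 1 ≠ n)) = ∅ := by
    ext k; simp [h]
  rw [this]
  simp
  intro hj; rw [hj]

lemma move_eq (a : Fin n → ZMod 2) (i : Fin n) (h : i.val + 1 < n) :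
    moveC n i a = fun j => if j = i then a i + (pr a i + a ⟨i.val + 1, h⟩) else a j := by
  funext j
  unfold moveC
  congr 1
  by_cases h0 : i.val = 0
  · have : (Finset.univ.filter
        (fun k : Fin n => (k.val + 1 = i.val ∨ i.val + 1 = k.val) ∧ i.val + 1 ≠ n))
        = {(⟨i.val + 1, h⟩ : Fin n)} := by
      ext k
      simp [Fin.ext_iff]
      omega
    rw [this, Finset.sum_singleton]
    unfold pr
    rw [dif_pos h0, zero_add]
  · have : (Finset.univ.filter
        (fun k : Fin n => (k.val + 1 = i.val ∨ i.val + 1 = k.val) ∧ i.val + 1 ≠ n))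
        = {(⟨i.val - 1, Nat.lt_of_le_of_lt (Nat.sub_le _ _) i.isLt⟩ : Fin n),
           (⟨i.val + 1, h⟩ : Fin n)} := by
      ext k
      simp [Fin.ext_iff]
      omega
    rw [this]
    rw [Finset.sum_pair (by apply Fin.ne_of_val_ne; show i.val - 1 ≠ i.val + 1; omega)]
    unfold pr
    rw [dif_neg h0]

lemma dv_move (a : Fin n → ZMod 2) (i : Fin n) (h : i.val + 1 < n) (j : Fin n) :
    dv (moveC n i a) j = dv a (Equiv.swap i ⟨i.val + 1, h⟩ j) := by
  set i' : Fin n := ⟨i.val + 1, h⟩ with hi'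
  have h2 : (2 : ZMod 2) = 0 := rfl
  have hne : i ≠ i' := by
    apply Fin.ne_of_val_ne; show i.val ≠ i.val + 1; omega
  set a' := moveC n i a with ha'
  have hai : a' i = a i + (pr a i + a i') := by
    rw [ha', move_eq a i h]; simp; rfl
  have haj : ∀ j : Fin n, j ≠ i → a' j = a j := by
    intro j hj
    rw [ha', move_eq a i h]; simp [hj]
  by_cases hji : j = i
  · subst hji
    rw [Equiv.swap_apply_left]
    have hpr : pr a' j = pr a j := by
      unfold pr
      by_cases h0 : j.val = 0
      · rw [dif_pos h0, dif_pos h0]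
      · rw [dif_neg h0, dif_neg h0]
        apply haj
        apply Fin.ne_of_val_ne
        show j.val - 1 ≠ j.val
        omega
    have hpr' : pr a i' = a j := by
      unfold pr
      have h0 : ¬ i'.val = 0 := by show ¬ (j.val + 1 = 0); omega
      rw [dif_neg h0]
      congr 1
    unfold dv
    rw [hai, hpr, hpr']
    linear_combination h2 * pr a j
  · by_cases hji' : j = i'
    · have hpr : pr a' j = a' i := by
        unfold pr
        have h0 : ¬ j.val = 0 := by rw [hji']; show ¬ (i.val + 1 = 0); omega
        rw [dif_neg h0]
        congr 1
        have hv : j.val = i.val + 1 := by rw [hji']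
        apply Fin.ext
        show j.val - 1 = i.val
        omega
      have hsw : Equiv.swap i i' j = i := by rw [hji', Equiv.swap_apply_right]
      rw [hsw]
      unfold dv
      rw [haj _ hji, hpr, hai, hji']
      linear_combination h2 * a i'
    · rw [Equiv.swap_apply_of_ne_of_ne hji hji']
      have hpr : pr a' j = pr a j := by
        unfold pr
        by_cases h0 : j.val = 0
        · rw [dif_pos h0, dif_pos h0]
        · rw [dif_neg h0, dif_neg h0]
          apply haj
          apply Fin.ne_of_val_ne
          have hv1 : j.val ≠ i.val := Fin.val_ne_of_ne hji
          have hv2 : j.val ≠ i.val + 1 := Fin.val_ne_of_ne hji'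
          show j.val - 1 ≠ i.val
          omega
      unfold dv
      rw [haj _ hji, hpr]

def wt (a : Fin n → ZMod 2) : ℕ := ∑ j, (dv a j).val

def pot (a : Fin n → ZMod 2) : ℕ := ∑ j, (dv a j).val * j.val

lemma wt_move (a : Fin n → ZMod 2) (i : Fin n) : wt (moveC n i a) = wt a := by
  rcases eq_or_lt_of_le (Nat.succ_le_of_lt i.isLt) with h | h
  · rw [move_last a i h]
  · unfold wt
    simp_rw [dv_move a i h]
    exact Equiv.sum_comp (Equiv.swap i ⟨i.val + 1, h⟩) (fun j => (dv a j).val)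

lemma pot_move_lt (a : Fin n → ZMod 2) (i : Fin n) (h : i.val + 1 < n)
    (h0 : dv a i = 0) (h1 : dv a ⟨i.val + 1, h⟩ = 1) :
    pot (moveC n i a) < pot a := by
  set i' : Fin n := ⟨i.val + 1, h⟩ with hi'
  have hne : i ≠ i' := Fin.ne_of_val_ne (by show i.val ≠ i.val + 1; omega)
  unfold pot
  simp_rw [dv_move a i h]
  have step1 : ∑ j, (dv a (Equiv.swap i i' j)).val * j.val
      = ∑ j, (dv a j).val * (Equiv.swap i i' j).val := by
    rw [← Equiv.sum_comp (Equiv.swap i i')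
      (fun j => (dv a j).val * ((Equiv.swap i i' j) : Fin n).val)]
    apply Finset.sum_congr rfl
    intro j _
    rw [Equiv.swap_apply_self]
  rw [step1]
  apply Finset.sum_lt_sum
  · intro j _
    by_cases hji : j = i
    · subst hji; rw [h0]; simp
    · by_cases hji' : j = i'
      · subst hji'; rw [Equiv.swap_apply_right]
        apply Nat.mul_le_mul_left
        show i.val ≤ i.val + 1
        omega
      · rw [Equiv.swap_apply_of_ne_of_ne hji hji']
  · refine ⟨i', Finset.mem_univ _, ?_⟩
    rw [Equiv.swap_apply_right, h1]
    show 1 * i.val < 1 * (i.val + 1)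
    omega

lemma dv_inj {a b : Fin n → ZMod 2} (hd : dv a = dv b) : a = b := by
  suffices hs : ∀ m, ∀ j : Fin n, j.val = m → a j = b j by
    funext j; exact hs j.val j rfl
  intro m
  induction m using Nat.strong_induction_on with
  | _ m ih =>
    intro j hj
    have h1 : dv a j = dv b j := congrFun hd j
    unfold dv at h1
    have h2 : pr a j = pr b j := by
      unfold pr
      by_cases h0 : j.val = 0
      · rw [dif_pos h0, dif_pos h0]
      · rw [dif_neg h0, dif_neg h0]
        exact ih (j.val - 1) (by omega) _ rfl
    rw [h2] at h1
    exact add_right_cancel h1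

lemma zmod2_ne_zero {x : ZMod 2} (h : x ≠ 0) : x = 1 := by
  revert h; revert x; decide

lemma zmod2_val (x : ZMod 2) : x.val = if x = 1 then 1 else 0 := by
  revert x; decide

def rep (n k : ℕ) : Fin n → ZMod 2 := fun j => ((min (j.val + 1) k : ℕ) : ZMod 2)

lemma dv_rep (k : ℕ) (j : Fin n) : dv (rep n k) j = if j.val < k then 1 else 0 := by
  have hpr : pr (rep n k) j = ((min j.val k : ℕ) : ZMod 2) := by
    unfold pr
    split
    · rename_i h; rw [h]; simp
    · rename_i h
      show ((min ((j.val - 1) + 1) k : ℕ) : ZMod 2) = _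
      congr 1
      omega
  unfold dv
  rw [hpr]
  unfold rep
  by_cases h : j.val < k
  · have h1 : min (j.val + 1) k = j.val + 1 := by omega
    have h2 : min j.val k = j.val := by omega
    rw [h1, h2, if_pos h]
    push_cast
    ring_nf
    simp [mul_two, CharTwo.add_self_eq_zero]
  · have h1 : min (j.val + 1) k = k := by omega
    have h2 : min j.val k = k := by omega
    rw [h1, h2, if_neg h]
    rw [CharTwo.add_self_eq_zero]

lemma card_val_lt (k : ℕ) : (Finset.univ.filter fun j : Fin n => j.val < k).card = min k n := by
  rw [Finset.card_filter]
  rw [Fin.sum_univ_eq_sum_range (fun m => if m < k then 1 else 0) n]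
  rw [← Finset.card_filter]
  have : (Finset.range n).filter (fun m => m < k) = Finset.range (min k n) := by
    ext m; simp; omega
  rw [this, Finset.card_range]

lemma wt_rep (k : ℕ) (hk : k ≤ n) : wt (rep n k) = k := by
  unfold wt
  have h : ∀ j : Fin n, (dv (rep n k) j).val = if j.val < k then 1 else 0 := by
    intro j; rw [dv_rep]; split <;> rfl
  simp_rw [h]
  rw [← Finset.card_filter, card_val_lt]
  omega

lemma wt_le (a : Fin n → ZMod 2) : wt a ≤ n := by
  unfold wt
  calc ∑ j, (dv a j).val ≤ ∑ _j : Fin n, 1 := by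
        apply Finset.sum_le_sum
        intro j _
        rw [zmod2_val]
        split <;> omega
    _ = n := by simp

lemma terminal_rep (a : Fin n → ZMod 2)
    (ht : ∀ m (hm : m + 1 < n), ¬ (dv a ⟨m, by omega⟩ = 0 ∧ dv a ⟨m + 1, hm⟩ = 1)) :
    a = rep n (wt a) := by
  have lower : ∀ d, ∀ j : Fin n, dv a j = 1 → ∀ p : Fin n, p.val + d = j.val → dv a p = 1 := by
    intro d
    induction d with
    | zero =>
      intro j hj p hp
      have : p = j := Fin.ext (by omega)
      rw [this]; exact hj
    | succ d ih =>
      intro j hj p hp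
      have hplt : p.val + 1 < n := by have := j.isLt; omega
      have h1 : dv a ⟨p.val + 1, hplt⟩ = 1 := ih j hj ⟨p.val + 1, hplt⟩ (by simp; omega)
      have := ht p.val hplt
      have hp0 : ¬ (dv a ⟨p.val, by omega⟩ = 0) := by
        intro hc
        exact this ⟨hc, h1⟩
      have : (⟨p.val, by omega⟩ : Fin n) = p := Fin.ext rfl
      rw [this] at hp0
      exact zmod2_ne_zero hp0
  set S := Finset.univ.filter (fun j : Fin n => dv a j = 1) with hS
  have hwt : wt a = S.card := by
    unfold wt
    rw [hS, Finset.card_filter]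
    apply Finset.sum_congr rfl
    intro j _
    rw [zmod2_val]
  have hmem : ∀ j : Fin n, j ∈ S ↔ j.val < S.card := by
    intro j
    constructor
    · intro hj
      rw [hS, Finset.mem_filter] at hj
      have hsub : Finset.univ.filter (fun p : Fin n => p.val < j.val + 1) ⊆ S := by
        intro p hp
        rw [Finset.mem_filter] at hp
        rw [hS, Finset.mem_filter]
        exact ⟨Finset.mem_univ _, lower (j.val - p.val) j hj.2 p (by omega)⟩
      have hcard := Finset.card_le_card hsub
      rw [card_val_lt] at hcard
      have := j.isLt
      omega
    · intro hj
      by_contra hjS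
      have hsub : S ⊆ Finset.univ.filter (fun p : Fin n => p.val < j.val) := by
        intro p hp
        rw [Finset.mem_filter]
        refine ⟨Finset.mem_univ _, ?_⟩
        by_contra hpj
        apply hjS
        rw [hS, Finset.mem_filter] at hp ⊢
        exact ⟨Finset.mem_univ _, lower (p.val - j.val) p hp.2 j (by omega)⟩
      have hcard := Finset.card_le_card hsub
      rw [card_val_lt] at hcard
      omega
  apply dv_inj
  funext j
  rw [dv_rep, hwt]
  by_cases hj : j.val < S.card
  · rw [if_pos hj]
    have := (hmem j).mpr hj
    rw [hS, Finset.mem_filter] at this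
    exact this.2
  · rw [if_neg hj]
    have hjS : j ∉ S := fun hc => hj ((hmem j).mp hc)
    rw [hS, Finset.mem_filter] at hjS
    by_contra hc
    exact hjS ⟨Finset.mem_univ _, zmod2_ne_zero hc⟩

lemma connect (a : Fin n → ZMod 2) :
    Quot.mk (fun a b : Fin n → ZMod 2 => ∃ i, b = moveC n i a) a
      = Quot.mk _ (rep n (wt a)) := by
  obtain ⟨N, hN⟩ : ∃ N, pot a ≤ N := ⟨_, le_rfl⟩
  induction N generalizing a with
  | zero =>
    by_cases hterm : ∀ m (hm : m + 1 < n), ¬ (dv a ⟨m, by omega⟩ = 0 ∧ dv a ⟨m + 1, hm⟩ = 1)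
    · conv_lhs => rw [terminal_rep a hterm]
    · push_neg at hterm
      obtain ⟨m, hm, hdv0, hdv1⟩ := hterm
      have := pot_move_lt a ⟨m, by omega⟩ hm hdv0 hdv1
      omega
  | succ N ih =>
    by_cases hterm : ∀ m (hm : m + 1 < n), ¬ (dv a ⟨m, by omega⟩ = 0 ∧ dv a ⟨m + 1, hm⟩ = 1)
    · conv_lhs => rw [terminal_rep a hterm]
    · push_neg at hterm
      obtain ⟨m, hm, hdv0, hdv1⟩ := hterm
      set i : Fin n := ⟨m, by omega⟩ with hi
      set a1 := moveC n i a with ha1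
      have hstep : Quot.mk (fun a b : Fin n → ZMod 2 => ∃ i, b = moveC n i a) a
          = Quot.mk _ a1 := Quot.sound ⟨i, rfl⟩
      rw [hstep]
      have hw : wt a1 = wt a := wt_move a i
      rw [← hw]
      apply ih
      have hlt := pot_move_lt a i hm hdv0 hdv1
      rw [← ha1] at hlt
      omega

end CnAux

/-- The number of equivalence classes of labelings of `C_n` equals `n + 1`. -/
theorem Cn_card_classes (n : ℕ) (hn : 3 ≤ n) :
    Nat.card (Quot (fun a b : Fin n → ZMod 2 => ∃ i, b = moveC n i a)) = n + 1 := by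
  classical
  set R := fun a b : Fin n → ZMod 2 => ∃ i, b = moveC n i a with hR
  have hinv : ∀ a b : Fin n → ZMod 2, R a b → CnAux.wt a = CnAux.wt b := by
    rintro a b ⟨i, rfl⟩
    exact (CnAux.wt_move a i).symm
  let F : Quot R → Fin (n + 1) :=
    Quot.lift (fun a => ⟨CnAux.wt a, Nat.lt_succ_of_le (CnAux.wt_le a)⟩)
      (fun a b hab => Fin.ext (hinv a b hab))
  have hbij : Function.Bijective F := by
    constructor
    · intro x y
      obtain ⟨a, rfl⟩ := Quot.exists_rep x
      obtain ⟨b, rfl⟩ := Quot.exists_rep y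
      intro hFe
      have hw : CnAux.wt a = CnAux.wt b := by simpa [F] using congrArg Fin.val hFe
      calc Quot.mk R a = Quot.mk R (CnAux.rep n (CnAux.wt a)) := CnAux.connect a
        _ = Quot.mk R (CnAux.rep n (CnAux.wt b)) := by rw [hw]
        _ = Quot.mk R b := (CnAux.connect b).symm
    · intro k
      refine ⟨Quot.mk R (CnAux.rep n k.val), ?_⟩
      apply Fin.ext
      simpa [F] using CnAux.wt_rep k.val (Nat.lt_succ_iff.mp k.isLt)
  rw [Nat.card_eq_of_bijective F hbij, Nat.card_eq_fintype_card, Fintype.card_fin]
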